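/- With a_{p,2k} as in the non-adjacent even-interval covering count, the generating function f(x,y) = ∑_{p≥0} ∑_{q=0}^{p} a_{p,p−q} x^p y^q satisfies f(x,y) = 1 / (1 − x y − x⁵ y / (1 − x²)) as an identity of formal power series. -/

import Mathlib

/-- Box configurations covering `k2` points of `{1,…,p−1}` (boxes recorded as
`(start, length)`, even length ≥ 4, pairwise non-adjacent). -/
def boxConfigs (p k2 : ℕ) : Finset (Finset (ℕ × ℕ)) :=
  ((Finset.Icc 1 p ×ˢ Finset.Icc 0 p).powerset).filter (fun F =>
    (∀ b ∈ F, 1 ≤ b.1 ∧ 4 ≤ b.2 ∧ Even b.2 ∧ b.1 + b.2 ≤ p) ∧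
    (∀ b ∈ F, ∀ b' ∈ F, b ≠ b' → b.1 + b.2 < b'.1 ∨ b'.1 + b'.2 < b.1) ∧
    (∑ b ∈ F, b.2) = k2)

/-- The covering numbers `a_{p,2k}`. -/
def a (p k2 : ℕ) : ℕ := (boxConfigs p k2).card

/-- The two-variable generating function `f(x,y) = ∑_{p,q} a_{p,p−q} x^p y^q`,
as a multivariate formal power series in `X 0 = x`, `X 1 = y`. -/
noncomputable def f : MvPowerSeries (Fin 2) ℚ :=
  fun d => if d 1 ≤ d 0 then (a (d 0) (d 0 - d 1) : ℚ) else 0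

lemma mem_boxConfigs {p k : ℕ} {F : Finset (ℕ × ℕ)} :
    F ∈ boxConfigs p k ↔
      (∀ b ∈ F, 1 ≤ b.1 ∧ 4 ≤ b.2 ∧ Even b.2 ∧ b.1 + b.2 ≤ p) ∧
      (∀ b ∈ F, ∀ b' ∈ F, b ≠ b' → b.1 + b.2 < b'.1 ∨ b'.1 + b'.2 < b.1) ∧
      (∑ b ∈ F, b.2) = k := by
  simp only [boxConfigs, Finset.mem_filter, Finset.mem_powerset]
  constructor
  · rintro ⟨-, h⟩; exact h
  · intro h
    refine ⟨fun b hb => ?_, h⟩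
    obtain ⟨h1, h4, _, hle⟩ := h.1 b hb
    simp only [Finset.mem_product, Finset.mem_Icc]
    omega

lemma k_le_of_mem {p k : ℕ} {F : Finset (ℕ × ℕ)} (hF : F ∈ boxConfigs p k) :
    k ≤ p - 1 ∨ k = 0 := by
  rw [mem_boxConfigs] at hF
  obtain ⟨hbox, hadj, hsum⟩ := hF
  left
  have hdisj : (F : Set (ℕ × ℕ)).PairwiseDisjoint (fun b => Finset.Ico b.1 (b.1 + b.2)) := by
    intro b hb b' hb' hne
    have := hadj b hb b' hb' hne
    simp only [Finset.disjoint_left, Finset.mem_Ico]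
    intro x hx hx'
    omega
  have hcard : (F.biUnion (fun b => Finset.Ico b.1 (b.1 + b.2))).card
      = ∑ b ∈ F, (Finset.Ico b.1 (b.1 + b.2)).card := Finset.card_biUnion hdisj
  have hsub : F.biUnion (fun b => Finset.Ico b.1 (b.1 + b.2)) ⊆ Finset.Ico 1 p := by
    intro x hx
    simp only [Finset.mem_biUnion, Finset.mem_Ico] at hx ⊢
    obtain ⟨b, hb, hxb⟩ := hx
    have := hbox b hb
    omega
  have := Finset.card_le_card hsub
  simp only [Nat.card_Ico, Nat.add_sub_cancel] at hcard this
  calc k = ∑ b ∈ F, b.2 := hsum.symm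
    _ = (F.biUnion (fun b => Finset.Ico b.1 (b.1 + b.2))).card := by
        rw [hcard]; exact Finset.sum_congr rfl fun b _ => by omega
    _ ≤ p - 1 := this

lemma a_self {p : ℕ} (hp : 1 ≤ p) : a p p = 0 := by
  rw [a, Finset.card_eq_zero, Finset.eq_empty_iff_forall_notMem]
  intro F hF
  rcases k_le_of_mem hF with h | h <;> omega

lemma a_zero (p : ℕ) : a p 0 = 1 := by
  rw [a]
  have : boxConfigs p 0 = {∅} := by
    ext F
    rw [mem_boxConfigs]
    simp only [Finset.mem_singleton]
    constructor
    · rintro ⟨hbox, -, hsum⟩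
      rw [Finset.eq_empty_iff_forall_notMem]
      intro b hb
      have h4 := (hbox b hb).2.1
      have := (Finset.sum_eq_zero_iff.mp hsum) b hb
      omega
    · rintro rfl; simp
  simp [this]


lemma card_ending (p k j : ℕ) (hj : j ∈ Finset.Icc 2 (k/2)) :
    ((boxConfigs p k).filter (fun F => (p - 2*j, 2*j) ∈ F)).card
      = if 2*j+1 ≤ p then a (p-(2*j+1)) (k-2*j) else 0 := by
  simp only [Finset.mem_Icc] at hj
  split_ifs with hple
  · refine Finset.card_bij' (fun F _ => F.erase (p - 2*j, 2*j))
      (fun G _ => insert (p - 2*j, 2*j) G) ?_ ?_ ?_ ?_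
    · -- forward membership
      intro F hF
      simp only [Finset.mem_filter, mem_boxConfigs] at hF
      obtain ⟨⟨hbox, hadj, hsum⟩, hmem⟩ := hF
      show F.erase (p - 2*j, 2*j) ∈ boxConfigs (p-(2*j+1)) (k-2*j)
      rw [mem_boxConfigs]
      refine ⟨?_, ?_, ?_⟩
      · intro b hb
        have hbF := Finset.mem_of_mem_erase hb
        have hne := Finset.ne_of_mem_erase hb
        obtain ⟨h1, h4, he, hle⟩ := hbox b hbF
        refine ⟨h1, h4, he, ?_⟩
        rcases hadj b hbF _ hmem hne with h | h
        · omega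
        · exfalso; omega
      · intro b hb b' hb' hne
        exact hadj b (Finset.mem_of_mem_erase hb) b' (Finset.mem_of_mem_erase hb') hne
      · have := Finset.add_sum_erase F (fun b => b.2) hmem
        simp only at this
        omega
    · -- backward membership
      intro G hG
      rw [mem_boxConfigs] at hG
      obtain ⟨hbox, hadj, hsum⟩ := hG
      have hnm : (p - 2*j, 2*j) ∉ G := by
        intro h
        have := (hbox _ h).2.2.2
        simp only at this
        omega
      simp only [Finset.mem_filter, mem_boxConfigs]
      refine ⟨⟨?_, ?_, ?_⟩, Finset.mem_insert_self _ _⟩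
      · intro b hb
        rcases Finset.mem_insert.mp hb with rfl | hbG
        · refine ⟨by omega, by omega, ⟨j, by omega⟩, by omega⟩
        · obtain ⟨h1, h4, he, hle⟩ := hbox b hbG
          exact ⟨h1, h4, he, by omega⟩
      · intro b hb b' hb' hne
        rcases Finset.mem_insert.mp hb with rfl | hbG <;>
          rcases Finset.mem_insert.mp hb' with rfl | hbG'
        · exact absurd rfl hne
        · right; have := (hbox b' hbG').2.2.2; simp only; omega
        · left; have := (hbox b hbG).2.2.2; simp only; omega
        · exact hadj b hbG b' hbG' hne
      · rw [Finset.sum_insert hnm]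
        simp only
        omega
    · intro F hF
      simp only [Finset.mem_filter] at hF
      exact Finset.insert_erase hF.2
    · intro G hG
      rw [mem_boxConfigs] at hG
      have hnm : (p - 2*j, 2*j) ∉ G := by
        intro h
        have := (hG.1 _ h).2.2.2
        simp only at this
        omega
      exact Finset.erase_insert hnm
  · rw [Finset.card_eq_zero, Finset.eq_empty_iff_forall_notMem]
    intro F hF
    simp only [Finset.mem_filter, mem_boxConfigs] at hF
    have := (hF.1.1 _ hF.2).1
    simp only at this
    omega

lemma a_rec (p k : ℕ) (hp : 1 ≤ p) :
    a p k = a (p-1) k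
      + ∑ j ∈ Finset.Icc 2 (k/2), if 2*j+1 ≤ p then a (p-(2*j+1)) (k-2*j) else 0 := by
  classical
  have hsplit := Finset.card_filter_add_card_filter_not
    (s := boxConfigs p k) (p := fun F => ∀ b ∈ F, b.1 + b.2 < p)
  have h1 : (boxConfigs p k).filter (fun F => ∀ b ∈ F, b.1 + b.2 < p)
      = boxConfigs (p-1) k := by
    ext F
    simp only [Finset.mem_filter, mem_boxConfigs]
    constructor
    · rintro ⟨⟨hbox, hadj, hsum⟩, hlt⟩
      refine ⟨fun b hb => ?_, hadj, hsum⟩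
      obtain ⟨x1, x2, x3, x4⟩ := hbox b hb
      have := hlt b hb
      exact ⟨x1, x2, x3, by omega⟩
    · rintro ⟨hbox, hadj, hsum⟩
      refine ⟨⟨fun b hb => ?_, hadj, hsum⟩, fun b hb => ?_⟩
      · obtain ⟨x1, x2, x3, x4⟩ := hbox b hb
        exact ⟨x1, x2, x3, by omega⟩
      · have := (hbox b hb).2.2.2; omega
  have h2 : (boxConfigs p k).filter (fun F => ¬ ∀ b ∈ F, b.1 + b.2 < p)
      = (Finset.Icc 2 (k/2)).biUnion
          (fun j => (boxConfigs p k).filter (fun F => (p - 2*j, 2*j) ∈ F)) := by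
    ext F
    simp only [Finset.mem_filter, Finset.mem_biUnion, Finset.mem_Icc]
    constructor
    · rintro ⟨hF, hnall⟩
      push_neg at hnall
      obtain ⟨b, hb, hble⟩ := hnall
      have hF' := hF
      rw [mem_boxConfigs] at hF'
      obtain ⟨h1, h4, ⟨j, hje⟩, hle⟩ := hF'.1 b hb
      have hend : b.1 + b.2 = p := by omega
      have hsum := hF'.2.2
      have hbk : b.2 ≤ k := hsum ▸ Finset.single_le_sum (f := fun b => b.2)
        (fun _ _ => Nat.zero_le _) hb
      refine ⟨j, ⟨by omega, by omega⟩, hF, ?_⟩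
      have : b = (p - 2*j, 2*j) := by
        have : b.1 = p - 2*j := by omega
        exact Prod.ext this (by omega)
      rwa [← this]
    · rintro ⟨j, ⟨hj2, hjk⟩, hF, hmem⟩
      refine ⟨hF, ?_⟩
      rw [mem_boxConfigs] at hF
      have h1 := (hF.1 _ hmem).1
      simp only at h1
      intro hall
      have := hall _ hmem
      simp only at this
      omega
  have hdisj : ∀ x ∈ Finset.Icc 2 (k/2), ∀ y ∈ Finset.Icc 2 (k/2), x ≠ y →
      Disjoint ((boxConfigs p k).filter (fun F => (p - 2*x, 2*x) ∈ F))
        ((boxConfigs p k).filter (fun F => (p - 2*y, 2*y) ∈ F)) := by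
    intro x _ y _ hxy
    simp only [Finset.disjoint_left, Finset.mem_filter]
    rintro F ⟨hF, hx⟩ ⟨-, hy⟩
    rw [mem_boxConfigs] at hF
    have h1x := (hF.1 _ hx).1
    have h1y := (hF.1 _ hy).1
    simp only at h1x h1y
    have hne : (p - 2*x, 2*x) ≠ (p - 2*y, 2*y) := by
      intro h
      have := congrArg Prod.snd h
      simp only at this
      omega
    rcases hF.2.1 _ hx _ hy hne with h | h <;> simp only at h <;> omega
  rw [a, ← hsplit, h1, h2, Finset.card_biUnion hdisj]
  congr 1
  exact Finset.sum_congr rfl fun j hj => card_ending p k j hj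

lemma sum_shift (p k : ℕ) (hk : 2 ≤ k) (hpk : k + 1 ≤ p) :
    (∑ j ∈ Finset.Icc 2 (k/2), if 2*j+1 ≤ p then a (p-(2*j+1)) (k-2*j) else 0)
    = (∑ j ∈ Finset.Icc 2 ((k-2)/2), if 2*j+1 ≤ p-2 then a (p-2-(2*j+1)) (k-2-2*j) else 0)
      + (if 4 ≤ k then a (p-5) (k-4) else 0) := by
  have hre : (∑ j ∈ Finset.Icc 3 (k/2), if 2*j+1 ≤ p then a (p-(2*j+1)) (k-2*j) else 0)
      = ∑ j ∈ Finset.Icc 2 ((k-2)/2), if 2*j+1 ≤ p-2 then a (p-2-(2*j+1)) (k-2-2*j) else 0 := by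
    have hIcc : Finset.Icc 3 (k/2)
        = (Finset.Icc 2 ((k-2)/2)).map (addRightEmbedding 1) := by
      rw [Finset.map_add_right_Icc]
      congr 1
      omega
    rw [hIcc, Finset.sum_map]
    refine Finset.sum_congr rfl fun j hj => ?_
    simp only [Finset.mem_Icc] at hj
    simp only [addRightEmbedding_apply]
    by_cases hc : 2*j+1 ≤ p-2
    · rw [if_pos hc, if_pos (by omega : 2*(j+1)+1 ≤ p)]
      congr 1 <;> omega
    · rw [if_neg hc, if_neg (by omega : ¬ 2*(j+1)+1 ≤ p)]
  by_cases h4 : 4 ≤ k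
  · have hIns : Finset.Icc 2 (k/2) = insert 2 (Finset.Icc 3 (k/2)) := by
      ext x
      simp only [Finset.mem_Icc, Finset.mem_insert]
      omega
    rw [hIns, Finset.sum_insert (by simp [Finset.mem_Icc]), hre, if_pos h4,
      if_pos (by omega : 2*2+1 ≤ p)]
    have : p - (2*2+1) = p - 5 := by omega
    have h2 : k - 2*2 = k - 4 := by omega
    rw [this, h2, add_comm]
  · have e1 : Finset.Icc 2 (k/2) = ∅ := by
      rw [Finset.Icc_eq_empty_iff]; omega
    have e2 : Finset.Icc 2 ((k-2)/2) = ∅ := by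
      rw [Finset.Icc_eq_empty_iff]; omega
    rw [e1, e2, if_neg h4]
    simp

lemma nat_key (p k : ℕ) (hpk : k + 1 ≤ p) :
    a p k + (if 2 ≤ k then a (p-3) (k-2) else 0)
      = a (p-1) k + (if 2 ≤ k then a (p-2) (k-2) else 0)
        + (if 4 ≤ k then a (p-5) (k-4) else 0) := by
  have hp : 1 ≤ p := by omega
  by_cases hk : 2 ≤ k
  · rw [if_pos hk, if_pos hk]
    have h1 := a_rec p k hp
    have h2 := a_rec (p-2) (k-2) (by omega)
    have h3 := sum_shift p k hk hpk
    have e1 : p - 2 - 1 = p - 3 := by omega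
    rw [e1] at h2
    omega
  · rw [if_neg hk, if_neg hk, if_neg (by omega)]
    have h1 := a_rec p k hp
    have he : Finset.Icc 2 (k/2) = ∅ := by rw [Finset.Icc_eq_empty_iff]; omega
    rw [he, Finset.sum_empty] at h1
    omega

/-- The coefficient function. -/
noncomputable def Fc (p q : ℕ) : ℚ := if q ≤ p then (a p (p-q) : ℚ) else 0

lemma key (p q : ℕ) :
    Fc p q - (if 2 ≤ p then Fc (p-2) q else 0)
      - (if 1 ≤ p ∧ 1 ≤ q then Fc (p-1) (q-1) else 0)
      + (if 3 ≤ p ∧ 1 ≤ q then Fc (p-3) (q-1) else 0)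
      - (if 5 ≤ p ∧ 1 ≤ q then Fc (p-5) (q-1) else 0)
    = (if p = 0 ∧ q = 0 then 1 else 0) - (if p = 2 ∧ q = 0 then 1 else 0) := by
  by_cases hqp : q ≤ p
  · obtain ⟨k, hk⟩ : ∃ k, p = q + k := ⟨p - q, by omega⟩
    subst hk
    by_cases hq : 1 ≤ q
    · -- main case
      have hpk : k + 1 ≤ q + k := by omega
      have hT1 : Fc (q+k) q = (a (q+k) k : ℚ) := by
        rw [Fc, if_pos hqp]; norm_cast; congr 1; omega
      have hT2 : (if 2 ≤ q+k then Fc (q+k-2) q else 0)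
          = (if 2 ≤ k then (a (q+k-2) (k-2) : ℚ) else 0) := by
        by_cases h : 2 ≤ k
        · rw [if_pos (by omega), if_pos h, Fc, if_pos (by omega)]
          norm_cast; congr 1; omega
        · rw [if_neg h]
          by_cases h2 : 2 ≤ q + k
          · rw [if_pos h2, Fc, if_neg (by omega)]
          · rw [if_neg h2]
      have hT3 : (if 1 ≤ q+k ∧ 1 ≤ q then Fc (q+k-1) (q-1) else 0) = (a (q+k-1) k : ℚ) := by
        rw [if_pos ⟨by omega, hq⟩, Fc, if_pos (by omega)]
        norm_cast; congr 1; omega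
      have hT4 : (if 3 ≤ q+k ∧ 1 ≤ q then Fc (q+k-3) (q-1) else 0)
          = (if 2 ≤ k then (a (q+k-3) (k-2) : ℚ) else 0) := by
        by_cases h : 2 ≤ k
        · rw [if_pos ⟨by omega, hq⟩, if_pos h, Fc, if_pos (by omega)]
          norm_cast; congr 1; omega
        · rw [if_neg h]
          by_cases h2 : 3 ≤ q+k ∧ 1 ≤ q
          · rw [if_pos h2, Fc, if_neg (by omega)]
          · rw [if_neg h2]
      have hT5 : (if 5 ≤ q+k ∧ 1 ≤ q then Fc (q+k-5) (q-1) else 0)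
          = (if 4 ≤ k then (a (q+k-5) (k-4) : ℚ) else 0) := by
        by_cases h : 4 ≤ k
        · rw [if_pos ⟨by omega, hq⟩, if_pos h, Fc, if_pos (by omega)]
          norm_cast; congr 1; omega
        · rw [if_neg h]
          by_cases h2 : 5 ≤ q+k ∧ 1 ≤ q
          · rw [if_pos h2, Fc, if_neg (by omega)]
          · rw [if_neg h2]
      rw [hT1, hT2, hT3, hT4, hT5,
        if_neg (show ¬(q + k = 0 ∧ q = 0) by omega),
        if_neg (show ¬(q + k = 2 ∧ q = 0) by omega)]
      have hnk := nat_key (q+k) k hpk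
      by_cases h2 : 2 ≤ k
      · by_cases h4 : 4 ≤ k
        · simp only [if_pos h2, if_pos h4] at hnk ⊢
          have hQ := congrArg (fun n : ℕ => (n : ℚ)) hnk
          push_cast at hQ
          linarith
        · simp only [if_pos h2, if_neg h4] at hnk ⊢
          have hQ := congrArg (fun n : ℕ => (n : ℚ)) hnk
          push_cast at hQ
          linarith
      · simp only [if_neg h2, if_neg (show ¬ 4 ≤ k by omega)] at hnk ⊢
        have hQ := congrArg (fun n : ℕ => (n : ℚ)) hnk
        push_cast at hQ
        linarith
    · -- q = 0
      have hq0 : q = 0 := by omega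
      subst hq0
      rw [if_neg (by omega : ¬ (1 ≤ 0+k ∧ 1 ≤ 0)), if_neg (by omega : ¬ (3 ≤ 0+k ∧ 1 ≤ 0)),
        if_neg (by omega : ¬ (5 ≤ 0+k ∧ 1 ≤ 0))]
      simp only [Nat.zero_add]
      have hT1 : Fc k 0 = (a k k : ℚ) := by
        rw [Fc, if_pos (Nat.zero_le _)]; norm_cast
      have hT2 : (if 2 ≤ k then Fc (k-2) 0 else 0)
          = (if 2 ≤ k then (a (k-2) (k-2) : ℚ) else 0) := by
        by_cases h : 2 ≤ k
        · rw [if_pos h, if_pos h, Fc, if_pos (Nat.zero_le _)]; norm_cast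
        · rw [if_neg h, if_neg h]
      rw [hT1, hT2]
      rcases Nat.lt_or_ge k 3 with h | h
      · interval_cases k
        · norm_num [a_zero 0]
        · norm_num [a_self (by norm_num : (1:ℕ) ≤ 1)]
        · rw [if_pos le_rfl, a_self (by norm_num : (1:ℕ) ≤ 2), a_zero 0]
          norm_num
      · rw [if_pos (by omega), a_self (by omega), a_self (by omega : 1 ≤ k - 2)]
        simp [show k ≠ 0 by omega, show k ≠ 2 by omega]
  · -- q > p
    rw [Fc, if_neg hqp]
    rw [if_neg (by omega : ¬(p = 0 ∧ q = 0)), if_neg (by omega : ¬(p = 2 ∧ q = 0))]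
    have h2 : (if 2 ≤ p then Fc (p-2) q else 0) = 0 := by
      by_cases h : 2 ≤ p
      · rw [if_pos h, Fc, if_neg (by omega)]
      · rw [if_neg h]
    have h3 : (if 1 ≤ p ∧ 1 ≤ q then Fc (p-1) (q-1) else 0) = 0 := by
      by_cases h : 1 ≤ p ∧ 1 ≤ q
      · rw [if_pos h, Fc, if_neg (by omega)]
      · rw [if_neg h]
    have h4 : (if 3 ≤ p ∧ 1 ≤ q then Fc (p-3) (q-1) else 0) = 0 := by
      by_cases h : 3 ≤ p ∧ 1 ≤ q
      · rw [if_pos h, Fc, if_neg (by omega)]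
      · rw [if_neg h]
    have h5 : (if 5 ≤ p ∧ 1 ≤ q then Fc (p-5) (q-1) else 0) = 0 := by
      by_cases h : 5 ≤ p ∧ 1 ≤ q
      · rw [if_pos h, Fc, if_neg (by omega)]
      · rw [if_neg h]
    rw [h2, h3, h4, h5]
    ring


open MvPowerSeries Finsupp in
lemma coeff_f_shift (d : Fin 2 →₀ ℕ) (i j : ℕ) :
    MvPowerSeries.coeff d (f * monomial (single 0 i + single 1 j) 1)
      = if i ≤ d 0 ∧ j ≤ d 1 then Fc (d 0 - i) (d 1 - j) else 0 := by
  rw [coeff_mul_monomial]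
  have hle : (single 0 i + single 1 j : Fin 2 →₀ ℕ) ≤ d ↔ i ≤ d 0 ∧ j ≤ d 1 := by
    rw [Finsupp.le_def]
    constructor
    · intro h
      refine ⟨?_, ?_⟩
      · have := h 0
        simpa [Finsupp.single_apply] using this
      · have := h 1
        simpa [Finsupp.single_apply] using this
    · rintro ⟨h0, h1⟩ s
      fin_cases s <;> simp [Finsupp.single_apply, *]
  rw [if_congr hle (mul_one _) rfl]
  by_cases h : i ≤ d 0 ∧ j ≤ d 1
  · rw [if_pos h, if_pos h, coeff_apply]
    have h0 : ((d - (single 0 i + single 1 j) : Fin 2 →₀ ℕ)) 0 = d 0 - i := by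
      simp [Finsupp.tsub_apply, Finsupp.single_apply]
    have h1 : ((d - (single 0 i + single 1 j) : Fin 2 →₀ ℕ)) 1 = d 1 - j := by
      simp [Finsupp.tsub_apply, Finsupp.single_apply]
    show Fc ((d - (single 0 i + single 1 j) : Fin 2 →₀ ℕ) 0)
        ((d - (single 0 i + single 1 j) : Fin 2 →₀ ℕ) 1) = _
    rw [h0, h1]
  · rw [if_neg h, if_neg h]

open MvPowerSeries Finsupp in
/-- Generating function identity `f(x,y) = 1/(1 − xy − x⁵y/(1−x²))`, stated in the
denominator-cleared form `f · ((1−x²)(1−xy) − x⁵y) = 1 − x²`. -/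
theorem generating_function_identity :
    f * (1 - (X 0 : MvPowerSeries (Fin 2) ℚ) ^ 2 - X 0 * X 1 + X 0 ^ 3 * X 1
          - X 0 ^ 5 * X 1) =
      1 - (X 0 : MvPowerSeries (Fin 2) ℚ) ^ 2 := by
  have hA : (X 0 : MvPowerSeries (Fin 2) ℚ) ^ 2
      = monomial (single 0 2 + single 1 0) 1 := by
    rw [X_pow_eq, Finsupp.single_zero, add_zero]
  have hB : (X 0 : MvPowerSeries (Fin 2) ℚ) * X 1
      = monomial (single 0 1 + single 1 1) 1 := by
    rw [← pow_one (X 0 : MvPowerSeries (Fin 2) ℚ), ← pow_one (X 1 : MvPowerSeries (Fin 2) ℚ),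
      X_pow_eq, X_pow_eq, monomial_mul_monomial, one_mul]
  have hC : (X 0 : MvPowerSeries (Fin 2) ℚ) ^ 3 * X 1
      = monomial (single 0 3 + single 1 1) 1 := by
    rw [← pow_one (X 1 : MvPowerSeries (Fin 2) ℚ), X_pow_eq, X_pow_eq,
      monomial_mul_monomial, one_mul]
  have hD : (X 0 : MvPowerSeries (Fin 2) ℚ) ^ 5 * X 1
      = monomial (single 0 5 + single 1 1) 1 := by
    rw [← pow_one (X 1 : MvPowerSeries (Fin 2) ℚ), X_pow_eq, X_pow_eq,
      monomial_mul_monomial, one_mul]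
  apply MvPowerSeries.ext
  intro d
  rw [mul_sub, mul_add, mul_sub, mul_sub, mul_one, hA, hB, hC, hD]
  rw [map_sub, map_add, map_sub, map_sub, map_sub]
  rw [coeff_f_shift d 2 0, coeff_f_shift d 1 1, coeff_f_shift d 3 1, coeff_f_shift d 5 1,
    coeff_one, coeff_monomial]
  have hf : MvPowerSeries.coeff d f = Fc (d 0) (d 1) := rfl
  rw [hf]
  have hz : d = 0 ↔ d 0 = 0 ∧ d 1 = 0 := by
    constructor
    · rintro rfl; simp
    · rintro ⟨h0, h1⟩
      ext s
      fin_cases s <;> simp [*]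
  have hs : d = single 0 2 + single 1 0 ↔ d 0 = 2 ∧ d 1 = 0 := by
    rw [Finsupp.single_zero, add_zero]
    constructor
    · rintro rfl; simp [Finsupp.single_apply]
    · rintro ⟨h0, h1⟩
      ext s
      fin_cases s <;> simp [Finsupp.single_apply, *]
  rw [if_congr hz rfl rfl, if_congr hs rfl rfl]
  simp only [Nat.zero_le, and_true, Nat.sub_zero]
  exact key (d 0) (d 1)
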